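/- arXiv:2206.08396 — 3 statements merged into one kernel-verified Lean document; each statement's English description precedes it below -/
import Mathlib

section
/- Let V be a nonempty finite index set, Z = (z_{i,l})_{i,l∈V} a matrix of nonnegative real numbers, d = (d_{i,j})_{i,j∈V} a family of positive real numbers, ε a real number, and δ a natural number. Assume that for every i ∈ V and every subset S ⊆ V with |S| ≤ δ one has Σ_{l∈S} z_{i,l} < 1, and define for all i, j ∈ V the reserved privacy budget ε_{i,j} = (1/d_{i,j})·ln( max over all subsets S ⊆ V with |S| ≤ δ of (1 − Σ_{l∈S} z_{j,l})/(1 − Σ_{l∈S} z_{i,l}) ). If for all i, j, k ∈ V it holds that z_{i,k} ≤ e^{(ε − ε_{i,j})·d_{i,j}} · z_{j,k}, then Z is δ-prunable: for every subset S ⊆ V with |S| ≤ δ and all i, j, k ∈ V, z_{i,k}/(1 − Σ_{l∈S} z_{i,l}) ≤ e^{ε·d_{i,j}} · z_{j,k}/(1 − Σ_{l∈S} z_{j,l}). -/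
open Finset

/-- **Prop. 2 (δ-prunability).** If the Geo-Ind constraints hold with the
reserved privacy budget `ε_{i,j}` subtracted from the budget `ε`, then the
obfuscation matrix stays `ε`-Geo-Indistinguishable after pruning any subset
of at most `δ` locations. -/
theorem delta_prunable_of_reserved_budget
    {V : Type*} [Fintype V] [DecidableEq V] [Nonempty V]
    (z : V → V → ℝ) (d : V → V → ℝ) (ε : ℝ) (δ : ℕ)
    (hz : ∀ i l, 0 ≤ z i l)
    (hd : ∀ i j, 0 < d i j)
    (hsum : ∀ (i : V) (S : Finset V), S.card ≤ δ → ∑ l ∈ S, z i l < 1)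
    (εres : V → V → ℝ)
    (hεres : ∀ i j, εres i j = (1 / d i j) *
      Real.log (((Finset.univ : Finset (Finset V)).filter (fun S => S.card ≤ δ)).sup'
        ⟨∅, by simp⟩
        (fun S => (1 - ∑ l ∈ S, z j l) / (1 - ∑ l ∈ S, z i l))))
    (hGeo : ∀ i j k, z i k ≤ Real.exp ((ε - εres i j) * d i j) * z j k) :
    ∀ (S : Finset V), S.card ≤ δ → ∀ i j k,
      z i k / (1 - ∑ l ∈ S, z i l) ≤
        Real.exp (ε * d i j) * (z j k / (1 - ∑ l ∈ S, z j l)) := by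
  intro S hS i j k
  have hSi := hsum i S hS
  have hSj := hsum j S hS
  have hAi : (0:ℝ) < 1 - ∑ l ∈ S, z i l := by linarith
  have hAj : (0:ℝ) < 1 - ∑ l ∈ S, z j l := by linarith
  set F := ((Finset.univ : Finset (Finset V)).filter (fun S => S.card ≤ δ)) with hF
  have hne : F.Nonempty := ⟨∅, by simp [hF]⟩
  set M := F.sup' hne (fun S => (1 - ∑ l ∈ S, z j l) / (1 - ∑ l ∈ S, z i l)) with hM
  have hmem : S ∈ F := by simp [hF, hS]
  have hMle : (1 - ∑ l ∈ S, z j l) / (1 - ∑ l ∈ S, z i l) ≤ M :=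
    Finset.le_sup' (fun T => (1 - ∑ l ∈ T, z j l) / (1 - ∑ l ∈ T, z i l)) hmem
  have hratio : 0 < (1 - ∑ l ∈ S, z j l) / (1 - ∑ l ∈ S, z i l) := div_pos hAj hAi
  have hMpos : 0 < M := lt_of_lt_of_le hratio hMle
  have hεd : εres i j * d i j = Real.log M := by
    rw [hεres i j]
    field_simp
    rw [mul_div_cancel_left₀ _ (hd i j).ne']
  have hexp : Real.exp ((ε - εres i j) * d i j) = Real.exp (ε * d i j) / M := by
    rw [sub_mul, Real.exp_sub, hεd, Real.exp_log hMpos]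
  have hG := hGeo i j k
  rw [hexp] at hG
  have hepos : 0 < Real.exp (ε * d i j) := Real.exp_pos _
  rw [div_le_iff₀ hAi]
  calc z i k ≤ Real.exp (ε * d i j) / M * z j k := hG
    _ ≤ Real.exp (ε * d i j) * (z j k / (1 - ∑ l ∈ S, z j l)) * (1 - ∑ l ∈ S, z i l) := by
        have key : (1 - ∑ l ∈ S, z j l) ≤ M * (1 - ∑ l ∈ S, z i l) := by
          rw [div_le_iff₀ hAi] at hMle; exact hMle
        rw [div_mul_eq_mul_div, div_le_iff₀ hMpos]
        have h1 : Real.exp (ε * d i j) * (z j k / (1 - ∑ l ∈ S, z j l)) * (1 - ∑ l ∈ S, z i l) * M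
            = Real.exp (ε * d i j) * z j k * ((M * (1 - ∑ l ∈ S, z i l)) / (1 - ∑ l ∈ S, z j l)) := by
          ring
        rw [h1]
        have h2 : (1:ℝ) ≤ (M * (1 - ∑ l ∈ S, z i l)) / (1 - ∑ l ∈ S, z j l) :=
          (one_le_div hAj).mpr key
        nlinarith [mul_nonneg hepos.le (hz j k)]
end

section
/- Let Λ (leaf locations) and W (coarse locations) be nonempty finite index sets, r : Λ → W a surjection, p : Λ → ℝ nonnegative priors with P_i = Σ_{u∈Λ, r(u)=i} p_u > 0 for every i ∈ W, c > 0 a real number, and Z⁰ = (z⁰_{u,v})_{u,v∈Λ} a matrix of nonnegative reals satisfying z⁰_{u,w} ≤ c·z⁰_{v,w} for all u, v, w ∈ Λ. Define z^l_{i,j} = ( Σ_{u∈Λ, r(u)=i} p_u · Σ_{v∈Λ, r(v)=j} z⁰_{u,v} ) / P_i for i, j ∈ W. Then z^l_{i,k} ≤ c·z^l_{j,k} for all i, j, k ∈ W; that is, matrix precision reduction preserves ε-Geo-Indistinguishability (taking c = e^{ε}). -/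
open Finset

/-- **Prop. 4, part 2.** Matrix precision reduction preserves the
`ε`-Geo-Indistinguishability constraint with uniform factor `c = e^ε`:
if `z0 u w ≤ c * z0 v w` for all leaves, then the precision-reduced matrix
satisfies `zl i k ≤ c * zl j k` for all coarse locations. -/
theorem precision_reduction_preserves_geoInd
    {Λ W : Type*} [Fintype Λ] [Fintype W] [Nonempty Λ] [Nonempty W] [DecidableEq W]
    (r : Λ → W) (hr : Function.Surjective r)
    (p : Λ → ℝ) (hp : ∀ u, 0 ≤ p u)
    (P : W → ℝ)
    (hP : ∀ i, P i = ∑ u ∈ Finset.univ.filter (fun u => r u = i), p u)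
    (hPpos : ∀ i, 0 < P i)
    (c : ℝ) (hc : 0 < c)
    (z0 : Λ → Λ → ℝ) (hz0 : ∀ u v, 0 ≤ z0 u v)
    (hGeo : ∀ u v w, z0 u w ≤ c * z0 v w)
    (zl : W → W → ℝ)
    (hzl : ∀ i j, zl i j =
      (∑ u ∈ Finset.univ.filter (fun u => r u = i),
        p u * ∑ v ∈ Finset.univ.filter (fun v => r v = j), z0 u v) / P i) :
    ∀ i j k, zl i k ≤ c * zl j k := by
  intro i j k
  set S : Λ → ℝ := fun u => ∑ v ∈ Finset.univ.filter (fun v => r v = k), z0 u v with hS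
  have hSgeo : ∀ u v : Λ, S u ≤ c * S v := by
    intro u v
    rw [hS]
    simp only [Finset.mul_sum]
    exact Finset.sum_le_sum fun w _ => hGeo u v w
  -- zl j k is a weighted average of S over the fiber of j; find a point below it
  have hkey : ∃ v0 ∈ Finset.univ.filter (fun v => r v = j), 0 < p v0 ∧ S v0 ≤ zl j k := by
    by_contra h
    push_neg at h
    have hsum : ∑ v ∈ Finset.univ.filter (fun v => r v = j), p v * zl j k
        = P j * zl j k := by
      rw [← Finset.sum_mul, ← hP]
    have hsum2 : ∑ v ∈ Finset.univ.filter (fun v => r v = j), p v * S v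
        = P j * zl j k := by
      rw [hzl j k, mul_div_cancel₀ _ (ne_of_gt (hPpos j))]
    -- find some v with positive p in the fiber
    have hpos : ∃ v ∈ Finset.univ.filter (fun v => r v = j), 0 < p v := by
      by_contra h2
      push_neg at h2
      have : P j ≤ 0 := by
        rw [hP]
        apply Finset.sum_nonpos
        intro v hv
        exact h2 v hv
      exact absurd this (not_le.mpr (hPpos j))
    obtain ⟨v1, hv1, hpv1⟩ := hpos
    have hlt : ∑ v ∈ Finset.univ.filter (fun v => r v = j), p v * zl j k
        < ∑ v ∈ Finset.univ.filter (fun v => r v = j), p v * S v := by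
      apply Finset.sum_lt_sum
      · intro v hv
        rcases lt_or_eq_of_le (hp v) with hpv | hpv
        · exact mul_le_mul_of_nonneg_left (le_of_lt (h v hv hpv)) (le_of_lt hpv)
        · rw [← hpv]; ring_nf; exact le_refl _
      · exact ⟨v1, hv1, mul_lt_mul_of_pos_left (h v1 hv1 hpv1) hpv1⟩
    rw [hsum, hsum2] at hlt
    exact lt_irrefl _ hlt
  obtain ⟨v0, _, _, hv0le⟩ := hkey
  have hup : zl i k ≤ c * S v0 := by
    rw [hzl i k, div_le_iff₀ (hPpos i)]
    calc ∑ u ∈ Finset.univ.filter (fun u => r u = i), p u * S u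
        ≤ ∑ u ∈ Finset.univ.filter (fun u => r u = i), p u * (c * S v0) :=
          Finset.sum_le_sum fun u _ => mul_le_mul_of_nonneg_left (hSgeo u v0) (hp u)
      _ = c * S v0 * P i := by rw [← Finset.sum_mul, ← hP]; ring
  calc zl i k ≤ c * S v0 := hup
    _ ≤ c * zl j k := mul_le_mul_of_nonneg_left hv0le (le_of_lt hc)
end

section
/- Let V be a nonempty finite index set, Z = (z_{i,l})_{i,l∈V} a matrix of nonnegative real numbers, d = (d_{i,j})_{i,j∈V} a family of positive real numbers, ε a real number, and δ a natural number. Assume Σ_{l∈S} z_{i,l} < 1 for every i ∈ V and every subset S ⊆ V with |S| ≤ δ, and let ε_{i,j} = (1/d_{i,j})·ln( max over all subsets S ⊆ V with |S| ≤ δ of (1 − Σ_{l∈S} z_{j,l})/(1 − Σ_{l∈S} z_{i,l}) ). Suppose B = (B_{i,j})_{i,j∈V} is any family of real numbers with B_{i,j} ≥ ε_{i,j} for all i, j, and that for all i, j, k ∈ V it holds that z_{i,k} ≤ e^{(ε − B_{i,j})·d_{i,j}}·z_{j,k}. Then Z is δ-prunable: for every subset S ⊆ V with |S| ≤ δ and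 all i, j, k ∈ V, z_{i,k}/(1 − Σ_{l∈S} z_{i,l}) ≤ e^{ε·d_{i,j}}·z_{j,k}/(1 − Σ_{l∈S} z_{j,l}). -/
open Finset

/-- Imposing the Geo-Ind constraints with *any* upper bound `B_{i,j}` on the
reserved privacy budget `ε_{i,j}` (in particular with the approximation
`ε'_{i,j}`) is still a sufficient condition for `δ`-prunability. -/
theorem delta_prunable_of_budget_upper_bound
    {V : Type*} [Fintype V] [DecidableEq V] [Nonempty V]
    (z : V → V → ℝ) (d : V → V → ℝ) (ε : ℝ) (δ : ℕ)
    (hz : ∀ i l, 0 ≤ z i l)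
    (hd : ∀ i j, 0 < d i j)
    (hsum : ∀ (i : V) (S : Finset V), S.card ≤ δ → ∑ l ∈ S, z i l < 1)
    (εres : V → V → ℝ)
    (hεres : ∀ i j, εres i j = (1 / d i j) *
      Real.log (((Finset.univ : Finset (Finset V)).filter (fun S => S.card ≤ δ)).sup'
        ⟨∅, by simp⟩
        (fun S => (1 - ∑ l ∈ S, z j l) / (1 - ∑ l ∈ S, z i l))))
    (B : V → V → ℝ)
    (hB : ∀ i j, εres i j ≤ B i j)
    (hGeo : ∀ i j k, z i k ≤ Real.exp ((ε - B i j) * d i j) * z j k) :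
    ∀ (S : Finset V), S.card ≤ δ → ∀ i j k,
      z i k / (1 - ∑ l ∈ S, z i l) ≤
        Real.exp (ε * d i j) * (z j k / (1 - ∑ l ∈ S, z j l)) := by
  intro S hS i j k
  have hA : 0 < 1 - ∑ l ∈ S, z i l := by linarith [hsum i S hS]
  have hC : 0 < 1 - ∑ l ∈ S, z j l := by linarith [hsum j S hS]
  set R := (((Finset.univ : Finset (Finset V)).filter (fun S => S.card ≤ δ)).sup'
      ⟨∅, by simp⟩
      (fun S => (1 - ∑ l ∈ S, z j l) / (1 - ∑ l ∈ S, z i l))) with hRdef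
  have hmem : S ∈ (Finset.univ : Finset (Finset V)).filter (fun S => S.card ≤ δ) := by
    simp [hS]
  have hR : (1 - ∑ l ∈ S, z j l) / (1 - ∑ l ∈ S, z i l) ≤ R :=
    Finset.le_sup' (f := fun T => (1 - ∑ l ∈ T, z j l) / (1 - ∑ l ∈ T, z i l)) hmem
  have hRpos : 0 < R := lt_of_lt_of_le (div_pos hC hA) hR
  have hRexp : R = Real.exp (εres i j * d i j) := by
    rw [hεres, one_div, inv_mul_eq_div, div_mul_cancel₀ _ (hd i j).ne',
      Real.exp_log hRpos]
  have hRB : R ≤ Real.exp (B i j * d i j) := by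
    rw [hRexp]
    exact Real.exp_le_exp.mpr (mul_le_mul_of_nonneg_right (hB i j) (hd i j).le)
  have hCA : 1 - ∑ l ∈ S, z j l ≤ Real.exp (B i j * d i j) * (1 - ∑ l ∈ S, z i l) := by
    have := (div_le_iff₀ hA).mp (hR.trans hRB)
    linarith
  have hkey : z i k * (1 - ∑ l ∈ S, z j l) ≤
      Real.exp (ε * d i j) * z j k * (1 - ∑ l ∈ S, z i l) := by
    have h1 : z i k * (1 - ∑ l ∈ S, z j l) ≤
        (Real.exp ((ε - B i j) * d i j) * z j k) *
          (Real.exp (B i j * d i j) * (1 - ∑ l ∈ S, z i l)) :=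
      mul_le_mul (hGeo i j k) hCA hC.le
        (mul_nonneg (Real.exp_pos _).le (hz j k))
    calc z i k * (1 - ∑ l ∈ S, z j l) ≤ _ := h1
      _ = Real.exp ((ε - B i j) * d i j + B i j * d i j) * z j k *
            (1 - ∑ l ∈ S, z i l) := by rw [Real.exp_add]; ring
      _ = Real.exp (ε * d i j) * z j k * (1 - ∑ l ∈ S, z i l) := by ring_nf
  rw [mul_div_assoc', div_le_div_iff₀ hA hC]
  linarith
end
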